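/- Let x, y ∈ Δ([N]) be histograms where x has size t (i.e., t·x^i ∈ ℕ for all i) with all coordinates of y positive, let x̄ be obtained from x by adding one entry (so (t+1)·x̄^i = t·x^i + [i = i₀] for some index i₀), and let ȳ^i = (t/(t+1))·y^i + 1/((t+1)N) for all i. Then the relative entropy satisfies RE(x̄‖ȳ) − RE(x‖y) ≤ (log N)/(t+1) + (log t)/(t+1) + log((t+1)/t). -/

import Mathlib

open Real Finset

/-- Two-term log-sum inequality. -/
lemma logsum2 (a b c e : ℝ) (ha : 0 ≤ a) (hb : 0 < b) (hc : 0 < c) (he : 0 < e) :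
    (a + c) * Real.log ((a + c) / (b + e)) ≤ a * Real.log (a / b) + c * Real.log (c / e) := by
  rcases ha.eq_or_lt with h | ha
  · subst h
    simp only [zero_add, zero_mul]
    have h1 : c / (b + e) ≤ c / e := by gcongr; linarith
    have h2 : (0:ℝ) < c / (b + e) := by positivity
    exact mul_le_mul_of_nonneg_left (Real.log_le_log h2 h1) hc.le
  · set z₁ := (a + c) * b / ((b + e) * a) with hz₁
    set z₂ := (a + c) * e / ((b + e) * c) with hz₂
    have hz₁pos : 0 < z₁ := by positivity
    have hz₂pos : 0 < z₂ := by positivity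
    have e₁ : (a + c) / (b + e) = (a / b) * z₁ := by rw [hz₁]; field_simp
    have e₂ : (a + c) / (b + e) = (c / e) * z₂ := by rw [hz₂]; field_simp
    have l₁ : Real.log ((a + c) / (b + e)) = Real.log (a / b) + Real.log z₁ := by
      rw [e₁, Real.log_mul (by positivity) (ne_of_gt hz₁pos)]
    have l₂ : Real.log ((a + c) / (b + e)) = Real.log (c / e) + Real.log z₂ := by
      rw [e₂, Real.log_mul (by positivity) (ne_of_gt hz₂pos)]
    have b₁ : Real.log z₁ ≤ z₁ - 1 := Real.log_le_sub_one_of_pos hz₁pos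
    have b₂ : Real.log z₂ ≤ z₂ - 1 := Real.log_le_sub_one_of_pos hz₂pos
    have key : a * z₁ + c * z₂ = a + c := by rw [hz₁, hz₂]; field_simp
    calc (a + c) * Real.log ((a + c) / (b + e))
        = a * (Real.log (a / b) + Real.log z₁) + c * (Real.log (c / e) + Real.log z₂) := by
          rw [← l₁, ← l₂]; ring
      _ ≤ a * (Real.log (a / b) + (z₁ - 1)) + c * (Real.log (c / e) + (z₂ - 1)) := by
          have := ha.le; nlinarith [mul_le_mul_of_nonneg_left b₁ ha.le, mul_le_mul_of_nonneg_left b₂ hc.le]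
      _ = a * Real.log (a / b) + c * Real.log (c / e) + (a * z₁ + c * z₂ - (a + c)) := by ring
      _ = a * Real.log (a / b) + c * Real.log (c / e) := by rw [key]; ring

/-- Gibbs' inequality. -/
lemma gibbs {N : ℕ} (x y : Fin N → ℝ) (hx0 : ∀ i, 0 ≤ x i) (hx1 : ∑ i, x i = 1)
    (hy0 : ∀ i, 0 < y i) (hy1 : ∑ i, y i = 1) :
    0 ≤ ∑ i, x i * Real.log (x i / y i) := by
  have h : ∀ i ∈ Finset.univ, x i - y i ≤ x i * Real.log (x i / y i) := by
    intro i _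
    rcases (hx0 i).eq_or_lt with h | h
    · rw [← h]; simp; linarith [hy0 i]
    · have hyx : 0 < y i / x i := div_pos (hy0 i) h
      have := Real.log_le_sub_one_of_pos hyx
      have hlog : Real.log (x i / y i) = - Real.log (y i / x i) := by
        rw [← Real.log_inv]; congr 1; field_simp
      rw [hlog]
      have : -(y i / x i - 1) ≤ - Real.log (y i / x i) := by linarith
      calc x i - y i = x i * -(y i / x i - 1) := by field_simp; ring
        _ ≤ x i * - Real.log (y i / x i) := by
            exact mul_le_mul_of_nonneg_left this h.le
  calc (0:ℝ) = ∑ i, (x i - y i) := by rw [Finset.sum_sub_distrib, hx1, hy1]; ring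
    _ ≤ ∑ i, x i * Real.log (x i / y i) := Finset.sum_le_sum h

/-- Relative entropy increase under one data arrival and the uniform
histogram update: with `x, y ∈ Δ([N])`, `x` of size `t` (counts `t·xⁱ ∈ ℕ`), `y`
positive, `x̄` obtained by adding one entry of type `i₀`, and
`ȳⁱ = (t/(t+1))·yⁱ + 1/((t+1)N)`, we have
`RE(x̄‖ȳ) − RE(x‖y) ≤ (log N)/(t+1) + (log t)/(t+1) + log((t+1)/t)`. -/
theorem relative_entropy_increase
    (N t : ℕ) (hN : 1 ≤ N) (ht : 1 ≤ t)
    (x y xbar ybar : Fin N → ℝ)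
    (hx0 : ∀ i, 0 ≤ x i) (hx1 : ∑ i, x i = 1)
    (hxint : ∀ i, ∃ k : ℕ, x i = (k : ℝ) / t)
    (hy0 : ∀ i, 0 < y i) (hy1 : ∑ i, y i = 1)
    (i₀ : Fin N)
    (hxbar : ∀ i, ((t : ℝ) + 1) * xbar i = (t : ℝ) * x i + (if i = i₀ then 1 else 0))
    (hybar : ∀ i, ybar i = ((t : ℝ) / ((t : ℝ) + 1)) * y i + 1 / (((t : ℝ) + 1) * N)) :
    (∑ i, xbar i * Real.log (xbar i / ybar i)) - (∑ i, x i * Real.log (x i / y i))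
      ≤ Real.log N / ((t : ℝ) + 1) + Real.log t / ((t : ℝ) + 1)
        + Real.log (((t : ℝ) + 1) / t) := by
  have htR : (1:ℝ) ≤ (t:ℝ) := by exact_mod_cast ht
  have ht0 : (0:ℝ) < (t:ℝ) := by linarith
  have ht1 : (0:ℝ) < (t:ℝ) + 1 := by linarith
  have hNR : (1:ℝ) ≤ (N:ℝ) := by exact_mod_cast hN
  have hN0 : (0:ℝ) < (N:ℝ) := by linarith
  have hNne : (N:ℝ) ≠ 0 := ne_of_gt hN0
  have htne : (t:ℝ) + 1 ≠ 0 := ne_of_gt ht1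
  set c : ℝ := (t:ℝ) / ((t:ℝ) + 1) with hc
  set d : ℝ := 1 / ((t:ℝ) + 1) with hd
  have hc0 : 0 < c := by rw [hc]; positivity
  have hd0 : 0 < d := by rw [hd]; positivity
  have hS : 0 ≤ ∑ i, x i * Real.log (x i / y i) := gibbs x y hx0 hx1 hy0 hy1
  have hterm : ∀ i ∈ Finset.univ, xbar i * Real.log (xbar i / ybar i)
      ≤ c * (x i * Real.log (x i / y i)) + (if i = i₀ then d * Real.log N else 0) := by
    intro i _
    have hyb : ybar i = c * y i + d * (1 / N) := by
      rw [hybar i, hc, hd]; field_simp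
    have hybpos : 0 < ybar i := by
      rw [hyb]
      exact add_pos (mul_pos hc0 (hy0 i)) (mul_pos hd0 (one_div_pos.mpr hN0))
    by_cases hi : i = i₀
    · subst hi
      have h := hxbar i; rw [if_pos rfl] at h
      have hxb : xbar i = c * x i + d := by
        rw [hc, hd]; field_simp; linear_combination h
      rw [if_pos rfl]
      have hfrac : (c * x i) / (c * y i) = x i / y i :=
        mul_div_mul_left _ _ (ne_of_gt hc0)
      have hdN : d / (d * (1 / N)) = (N:ℝ) := by
        rw [hd]; field_simp
      calc xbar i * Real.log (xbar i / ybar i)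
          = (c * x i + d) * Real.log ((c * x i + d) / (c * y i + d * (1/N))) := by
            rw [hxb, hyb]
        _ ≤ (c * x i) * Real.log ((c * x i) / (c * y i)) + d * Real.log (d / (d * (1/N))) :=
            logsum2 _ _ _ _ (mul_nonneg hc0.le (hx0 i)) (mul_pos hc0 (hy0 i)) hd0
              (mul_pos hd0 (one_div_pos.mpr hN0))
        _ = c * (x i * Real.log (x i / y i)) + d * Real.log N := by
            rw [hfrac, hdN]; ring
    · have h := hxbar i; rw [if_neg hi, add_zero] at h
      have hxb : xbar i = c * x i := by
        rw [hc]; field_simp; linear_combination h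
      rw [if_neg hi, add_zero]
      rcases (hx0 i).eq_or_lt with h0 | h0
      · rw [hxb, ← h0]; simp
      · have hxpos : 0 < c * x i := mul_pos hc0 h0
        have hcypos : 0 < c * y i := mul_pos hc0 (hy0 i)
        have hyble : c * y i ≤ ybar i := by
          rw [hyb]
          exact le_add_of_nonneg_right (mul_pos hd0 (one_div_pos.mpr hN0)).le
        have hfrac : (c * x i) / (c * y i) = x i / y i :=
          mul_div_mul_left _ _ (ne_of_gt hc0)
        have hlog : Real.log (xbar i / ybar i) ≤ Real.log (x i / y i) := by
          rw [← hfrac, hxb]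
          exact Real.log_le_log (div_pos hxpos hybpos)
            (div_le_div_of_nonneg_left hxpos.le hcypos hyble)
        calc xbar i * Real.log (xbar i / ybar i)
            ≤ xbar i * Real.log (x i / y i) :=
              mul_le_mul_of_nonneg_left hlog (by rw [hxb]; exact hxpos.le)
          _ = c * (x i * Real.log (x i / y i)) := by rw [hxb]; ring
  have hsum : ∑ i, xbar i * Real.log (xbar i / ybar i)
      ≤ c * (∑ i, x i * Real.log (x i / y i)) + d * Real.log N := by
    calc ∑ i, xbar i * Real.log (xbar i / ybar i)
        ≤ ∑ i, (c * (x i * Real.log (x i / y i)) + (if i = i₀ then d * Real.log N else 0)) :=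
          Finset.sum_le_sum hterm
      _ = c * (∑ i, x i * Real.log (x i / y i)) + d * Real.log N := by
          rw [Finset.sum_add_distrib, ← Finset.mul_sum]; simp
  have hlogt : 0 ≤ Real.log t := Real.log_nonneg htR
  have hlogtt : 0 ≤ Real.log (((t:ℝ) + 1) / t) :=
    Real.log_nonneg (by rw [le_div_iff₀ ht0]; linarith)
  have hcd : c = 1 - d := by rw [hc, hd]; field_simp; ring
  have hmain : (∑ i, xbar i * Real.log (xbar i / ybar i)) - (∑ i, x i * Real.log (x i / y i))
      ≤ d * Real.log N := by
    rw [hcd] at hsum; nlinarith [hS, hd0]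
  have hdlog : d * Real.log N = Real.log N / ((t:ℝ) + 1) := by rw [hd]; ring
  rw [hdlog] at hmain
  have : 0 ≤ Real.log t / ((t:ℝ) + 1) := div_nonneg hlogt ht1.le
  linarith
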